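/- arXiv:1812.00212 — 3 statements merged into one kernel-verified Lean document; each statement's English description precedes it below -/
import Mathlib

section
/- Let (X, μ) be a measure space, 1 ≤ p < ∞, and f : ℝ → ℝ a function such that g ↦ f ∘ g maps L^p(X, μ) to itself and this map is continuous from L^p to L^p. If there exists a measurable set A ⊆ X with 0 < μ(A) < ∞, then f is continuous on ℝ. -/
open MeasureTheory Filter Topology
open scoped ENNReal

/-- If `T_f : g ↦ f ∘ g` maps `L^p(X,μ)` to itself and is continuous from `L^p` to `L^p`
(in the sequential sense), and `μ` has a set of finite positive measure, then `f` is
continuous. -/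
theorem stmt0 {X : Type*} [MeasurableSpace X] (μ : Measure X)
    (p : ℝ≥0∞) (hp : 1 ≤ p) (hp' : p ≠ ∞) (f : ℝ → ℝ)
    (hmap : ∀ g : X → ℝ, MemLp g p μ → MemLp (f ∘ g) p μ)
    (hcont : ∀ (g : ℕ → X → ℝ) (g₀ : X → ℝ),
      (∀ ν, MemLp (g ν) p μ) → MemLp g₀ p μ →
      Tendsto (fun ν => eLpNorm (g ν - g₀) p μ) atTop (𝓝 0) →
      Tendsto (fun ν => eLpNorm (f ∘ g ν - f ∘ g₀) p μ) atTop (𝓝 0))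
    (A : Set X) (hA : MeasurableSet A) (hA0 : 0 < μ A) (hAfin : μ A < ∞) :
    Continuous f := by
  have hp0 : p ≠ 0 := fun h => by simp [h] at hp
  set c : ℝ≥0∞ := μ A ^ (1 / p.toReal) with hc
  have hptr : 0 < p.toReal := ENNReal.toReal_pos hp0 hp'
  have hc0 : c ≠ 0 := by
    simp [hc, ENNReal.rpow_eq_zero_iff, hA0.ne', hAfin.ne, hptr, one_div]
  have hcT : c ≠ ∞ := by
    refine (ENNReal.rpow_lt_top_of_nonneg (by positivity) hAfin.ne).ne
  rw [continuous_iff_seqContinuous]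
  intro x x₀ hx
  set g : ℕ → X → ℝ := fun ν => A.indicator fun _ => x ν with hg
  set g₀ : X → ℝ := A.indicator fun _ => x₀ with hg0
  have hmem : ∀ ν, MemLp (g ν) p μ := fun ν =>
    memLp_indicator_const p hA (x ν) (Or.inr hAfin.ne)
  have hmem0 : MemLp g₀ p μ := memLp_indicator_const p hA x₀ (Or.inr hAfin.ne)
  have hsub : ∀ ν, g ν - g₀ = A.indicator fun _ => x ν - x₀ := by
    intro ν; ext y
    by_cases hy : y ∈ A <;> simp [hg, hg0, hy]
  have htend : Tendsto (fun ν => eLpNorm (g ν - g₀) p μ) atTop (𝓝 0) := by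
    have heq : ∀ ν, eLpNorm (g ν - g₀) p μ = (‖x ν - x₀‖₊ : ℝ≥0∞) * c := by
      intro ν; rw [hsub ν, eLpNorm_indicator_const hA hp0 hp', enorm_eq_nnnorm]
    simp only [heq]
    have h1 : Tendsto (fun ν => (‖x ν - x₀‖₊ : ℝ≥0∞)) atTop (𝓝 0) := by
      rw [← ENNReal.coe_zero, ENNReal.tendsto_coe]
      have : Tendsto (fun ν => x ν - x₀) atTop (𝓝 0) := by
        simpa using hx.sub (tendsto_const_nhds (x := x₀))
      simpa [← NNReal.tendsto_coe] using this.nnnorm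
    simpa using ENNReal.Tendsto.mul_const h1 (Or.inr hcT)
  have key := hcont g g₀ hmem hmem0 htend
  have hsub' : ∀ ν, f ∘ g ν - f ∘ g₀ = A.indicator fun _ => f (x ν) - f x₀ := by
    intro ν; ext y
    by_cases hy : y ∈ A <;> simp [hg, hg0, hy]
  have heq' : ∀ ν, eLpNorm (f ∘ g ν - f ∘ g₀) p μ = (‖f (x ν) - f x₀‖₊ : ℝ≥0∞) * c := by
    intro ν; rw [hsub' ν, eLpNorm_indicator_const hA hp0 hp', enorm_eq_nnnorm]
  simp only [heq'] at key
  have key2 : Tendsto (fun ν => (‖f (x ν) - f x₀‖₊ : ℝ≥0∞)) atTop (𝓝 0) := by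
    have := ENNReal.Tendsto.mul_const key (Or.inr (ENNReal.inv_ne_top.mpr hc0))
    simpa [mul_assoc, ENNReal.mul_inv_cancel hc0 hcT] using this
  have key3 : Tendsto (fun ν => ‖f (x ν) - f x₀‖) atTop (𝓝 0) := by
    rw [← ENNReal.coe_zero, ENNReal.tendsto_coe] at key2
    have := (NNReal.continuous_coe.tendsto 0).comp key2
    simpa [Function.comp_def] using this
  have : Tendsto (fun ν => f (x ν)) atTop (𝓝 (f x₀)) :=
    tendsto_iff_norm_sub_tendsto_zero.mpr key3
  exact this
end

section
/- Let E_α := { g ∈ Ẇ²_1(ℝ) : g(0) = 0 and α_1 g'(−∞) + α_2 g'(0) + α_3 g'(+∞) = 0 }, where α = (α_1, α_2, α_3) ∈ ℝ³ satisfies α_1 + α_2 + α_3 = 1, and Ẇ²_1(ℝ) is the set of C¹ functions g on ℝ with g'' ∈ L¹(ℝ). Then Ẇ²_1(ℝ) = E_α ⊕ P_1, where P_1 is the space of affine functions, and for every g ∈ E_α one has |g(x)| ≤ |x| (|g'(−∞)| + ‖g''‖_1) for all x ∈ ℝ. -/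
open MeasureTheory Filter Topology
open scoped ENNReal

/-- `g ∈ Ẇ²₁(ℝ)`: `g` is `C¹` and `g'` is absolutely continuous with a second
derivative `h ∈ L¹(ℝ)`. -/
def MemW21dot (g : ℝ → ℝ) : Prop :=
  ContDiff ℝ 1 g ∧ ∃ h : ℝ → ℝ, Integrable h volume ∧
    ∀ x y : ℝ, deriv g y - deriv g x = ∫ t in x..y, h t

/-- Membership in the realization `E_α` of `Ẇ²₁(ℝ)`:
`g(0) = 0` and `α₁ g'(−∞) + α₂ g'(0) + α₃ g'(+∞) = 0`. -/
def MemEalpha (a1 a2 a3 : ℝ) (g : ℝ → ℝ) : Prop :=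
  MemW21dot g ∧ g 0 = 0 ∧ ∃ Lm Lp : ℝ,
    Tendsto (deriv g) atBot (𝓝 Lm) ∧ Tendsto (deriv g) atTop (𝓝 Lp) ∧
    a1 * Lm + a2 * deriv g 0 + a3 * Lp = 0

/-- Interval integrals of an integrable function are uniformly bounded by the `L¹` norm. -/
lemma abs_intervalIntegral_le (h : ℝ → ℝ) (hint : Integrable h volume) (x y : ℝ) :
    |∫ t in x..y, h t| ≤ ∫ t : ℝ, |h t| := by
  calc |∫ t in x..y, h t| ≤ ∫ t in Set.uIoc x y, |h t| := by
        simpa [Real.norm_eq_abs] using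
          intervalIntegral.norm_integral_le_integral_norm_uIoc (a := x) (b := y) (f := h)
    _ ≤ ∫ t : ℝ, |h t| :=
        setIntegral_le_integral hint.abs (Eventually.of_forall fun t => abs_nonneg _)

/-- Derivative of a function minus an affine function. -/
lemma deriv_sub_affine (g : ℝ → ℝ) (hg : ContDiff ℝ 1 g) (b c : ℝ) (x : ℝ) :
    deriv (fun y => g y - c - b * y) x = deriv g x - b := by
  have h1 : HasDerivAt g (deriv g x) x := ((hg.differentiable one_ne_zero) x).hasDerivAt
  have h2 : HasDerivAt (fun y => g y - c - b * y) (deriv g x - b) x := by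
    exact ((h1.sub_const c).sub ((hasDerivAt_id x).const_mul b)).congr_deriv (by simp)
  exact h2.deriv

/-- The pointwise bound on elements of `E_α`. -/
lemma bound_aux (g h : ℝ → ℝ) (Lm : ℝ) (hg : ContDiff ℝ 1 g) (hg0 : g 0 = 0)
    (hint : Integrable h volume)
    (hd : ∀ x y : ℝ, deriv g y - deriv g x = ∫ t in x..y, h t)
    (hLm : Tendsto (deriv g) atBot (𝓝 Lm)) (x : ℝ) :
    |g x| ≤ |x| * (|Lm| + ∫ t : ℝ, |h t|) := by
  set C : ℝ := ∫ t : ℝ, |h t| with hC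
  have hderiv_bound : ∀ t : ℝ, |deriv g t| ≤ |Lm| + C := by
    intro t
    have h1 : Tendsto (fun y : ℝ => |deriv g t - deriv g y|) atBot (𝓝 |deriv g t - Lm|) :=
      (tendsto_const_nhds.sub hLm).abs
    have h2 : |deriv g t - Lm| ≤ C := by
      refine le_of_tendsto h1 (Eventually.of_forall fun y => ?_)
      rw [hd y t]
      exact abs_intervalIntegral_le h hint y t
    calc |deriv g t| = |Lm + (deriv g t - Lm)| := by ring_nf
      _ ≤ |Lm| + |deriv g t - Lm| := abs_add_le _ _
      _ ≤ |Lm| + C := by linarith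
  have hftc : ∫ t in (0:ℝ)..x, deriv g t = g x - g 0 :=
    intervalIntegral.integral_deriv_eq_sub (fun t _ => (hg.differentiable one_ne_zero).differentiableAt)
      ((hg.continuous_deriv le_rfl).intervalIntegrable 0 x)
  have hbnd : |∫ t in (0:ℝ)..x, deriv g t| ≤ (|Lm| + C) * |x - 0| := by
    simpa [Real.norm_eq_abs] using intervalIntegral.norm_integral_le_of_norm_le_const
      (C := |Lm| + C) (f := deriv g) (a := (0:ℝ)) (b := x)
      (fun t _ => by simpa [Real.norm_eq_abs] using hderiv_bound t)
  rw [hftc, hg0, sub_zero] at hbnd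
  calc |g x| ≤ (|Lm| + C) * |x - 0| := hbnd
    _ = |x| * (|Lm| + C) := by rw [sub_zero]; ring

/-- For `α₁ + α₂ + α₃ = 1`, one has `Ẇ²₁(ℝ) = E_α ⊕ P₁` (unique decomposition into an
element of `E_α` plus an affine function), and every `g ∈ E_α` satisfies
`|g(x)| ≤ |x| (|g'(−∞)| + ‖g''‖₁)`. -/
theorem stmt15 (a1 a2 a3 : ℝ) (hsum : a1 + a2 + a3 = 1) :
    (∀ g : ℝ → ℝ, MemW21dot g →
      ∃! q : (ℝ → ℝ) × ℝ × ℝ, MemEalpha a1 a2 a3 q.1 ∧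
        ∀ x : ℝ, g x = q.1 x + q.2.1 + q.2.2 * x) ∧
    (∀ (g h : ℝ → ℝ) (Lm : ℝ), MemEalpha a1 a2 a3 g →
      Integrable h volume → (∀ x y : ℝ, deriv g y - deriv g x = ∫ t in x..y, h t) →
      Tendsto (deriv g) atBot (𝓝 Lm) →
      ∀ x : ℝ, |g x| ≤ |x| * (|Lm| + ∫ t : ℝ, |h t|)) := by
  constructor
  · intro g hg
    obtain ⟨hg1, h, hint, hd⟩ := hg
    -- the limits of `deriv g` at `±∞`
    set Lm : ℝ := deriv g 0 - ∫ t in Set.Iic (0:ℝ), h t with hLmdef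
    set Lp : ℝ := deriv g 0 + ∫ t in Set.Ioi (0:ℝ), h t with hLpdef
    have hTop : Tendsto (deriv g) atTop (𝓝 Lp) := by
      have h1 : Tendsto (fun y : ℝ => ∫ t in (0:ℝ)..y, h t) atTop
          (𝓝 (∫ t in Set.Ioi (0:ℝ), h t)) :=
        intervalIntegral_tendsto_integral_Ioi 0 hint.integrableOn tendsto_id
      have h2 : (fun y : ℝ => deriv g 0 + ∫ t in (0:ℝ)..y, h t) = deriv g := by
        funext y; have := hd 0 y; linarith
      rw [← h2]
      exact tendsto_const_nhds.add h1
    have hBot : Tendsto (deriv g) atBot (𝓝 Lm) := by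
      have h1 : Tendsto (fun x : ℝ => ∫ t in x..(0:ℝ), h t) atBot
          (𝓝 (∫ t in Set.Iic (0:ℝ), h t)) :=
        intervalIntegral_tendsto_integral_Iic 0 hint.integrableOn tendsto_id
      have h2 : (fun x : ℝ => deriv g 0 - ∫ t in x..(0:ℝ), h t) = deriv g := by
        funext x; have := hd x 0; linarith
      rw [← h2]
      exact tendsto_const_nhds.sub h1
    set b : ℝ := a1 * Lm + a2 * deriv g 0 + a3 * Lp with hbdef
    refine ⟨⟨fun y => g y - g 0 - b * y, g 0, b⟩, ⟨?_, fun x => by ring⟩, ?_⟩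
    · -- membership of `g₀` in `E_α`
      have hcd : ContDiff ℝ 1 (fun y => g y - g 0 - b * y) :=
        (hg1.sub contDiff_const).sub (contDiff_const.mul contDiff_id)
      have hder : deriv (fun y => g y - g 0 - b * y) = fun x => deriv g x - b :=
        funext fun x => deriv_sub_affine g hg1 b (g 0) x
      refine ⟨⟨hcd, h, hint, fun x y => by rw [hder]; simpa using hd x y⟩, by simp,
        Lm - b, Lp - b, ?_, ?_, ?_⟩
      · rw [hder]; exact hBot.sub tendsto_const_nhds
      · rw [hder]; exact hTop.sub tendsto_const_nhds
      · rw [hder]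
        simp only
        linear_combination (-b) * hsum - hbdef
    · -- uniqueness
      rintro ⟨q, a, c⟩ ⟨⟨⟨hq1, h', hint', hd'⟩, hq0, Lm', Lp', hqBot, hqTop, hcond⟩, heq⟩
      have hqeq : q = fun y => g y - a - c * y := by
        funext y; have := heq y; simp only at this ⊢; linarith
      have ha : a = g 0 := by
        have := hq0; rw [hqeq] at this; simp only at this; linarith
      have hqder : deriv q = fun x => deriv g x - c := by
        rw [hqeq]; exact funext fun x => deriv_sub_affine g hg1 c a x
      have hLm' : Lm' = Lm - c := by
        refine tendsto_nhds_unique hqBot ?_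
        rw [hqder]; exact hBot.sub tendsto_const_nhds
      have hLp' : Lp' = Lp - c := by
        refine tendsto_nhds_unique hqTop ?_
        rw [hqder]; exact hTop.sub tendsto_const_nhds
      have hq0' : deriv q 0 = deriv g 0 - c := by rw [hqder]
      have hc : c = b := by
        rw [hLm', hLp', hq0'] at hcond
        have : a1 * Lm + a2 * deriv g 0 + a3 * Lp - (a1 + a2 + a3) * c = 0 := by
          linarith [hcond]; 
        rw [hsum] at this
        linarith [hbdef]
      have hq : q = fun y => g y - g 0 - b * y := by rw [hqeq, ha, hc]
      simp only [Prod.mk.injEq]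
      exact ⟨hq, ha, hc⟩
  · rintro g h Lm ⟨⟨hg1, _⟩, hg0, _⟩ hint hd hLm x
    exact bound_aux g h Lm hg1 hg0 hint hd hLm x
end

section
/- Let 1 ≤ p, q < ∞ and let f : ℝ → ℝ be a function (not assumed continuous) such that the composition operator T_f(g) := f ∘ g maps L^p(X,μ) to L^q(X,μ) for a measure space (X,μ) containing a set A with 0 < μ(A) < ∞. If f is discontinuous at some point t_0 ≠ 0 (or at t_0 = 0 after normalizing f(0) = 0), then T_f is not continuous from L^p to L^q. -/
open MeasureTheory Filter Topology
open scoped ENNReal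

/-- If `f(0) = 0`, `T_f : g ↦ f ∘ g` maps `L^p(X,μ)` to `L^q(X,μ)`, there is a set `A`
with `0 < μ(A) < ∞`, and `f` is discontinuous at some point `t₀`, then `T_f` is not
continuous from `L^p` to `L^q`: there is a sequence converging in `L^p` whose image
does not converge in `L^q`. -/
theorem stmt17 {X : Type*} [MeasurableSpace X] (μ : Measure X)
    (p q : ℝ≥0∞) (hp : 1 ≤ p) (hp' : p ≠ ∞) (hq : 1 ≤ q) (hq' : q ≠ ∞)
    (f : ℝ → ℝ) (hf0 : f 0 = 0)
    (hmap : ∀ g : X → ℝ, MemLp g p μ → MemLp (f ∘ g) q μ)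
    (A : Set X) (hA : MeasurableSet A) (hA0 : 0 < μ A) (hAfin : μ A < ∞)
    (t₀ : ℝ) (hdisc : ¬ ContinuousAt f t₀) :
    ∃ (g : ℕ → X → ℝ) (g₀ : X → ℝ),
      (∀ ν, MemLp (g ν) p μ) ∧ MemLp g₀ p μ ∧
      Tendsto (fun ν => eLpNorm (g ν - g₀) p μ) atTop (𝓝 0) ∧
      ¬ Tendsto (fun ν => eLpNorm (f ∘ g ν - f ∘ g₀) q μ) atTop (𝓝 0) := by
  have hp0 : p ≠ 0 := by intro h; simp [h] at hp
  have hq0 : q ≠ 0 := by intro h; simp [h] at hq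
  -- extract ε and a sequence v ν → t₀ with |f (v ν) - f t₀| ≥ ε
  rw [Metric.continuousAt_iff] at hdisc
  push_neg at hdisc
  obtain ⟨ε, hε, hεv⟩ := hdisc
  have hv : ∀ ν : ℕ, ∃ v : ℝ, dist v t₀ < 1 / (ν + 1) ∧ ε ≤ dist (f v) (f t₀) := by
    intro ν
    obtain ⟨v, hv1, hv2⟩ := hεv (1 / (ν + 1)) (by positivity)
    exact ⟨v, hv1, hv2⟩
  choose v hv1 hv2 using hv
  -- the sequence of functions
  refine ⟨fun ν => A.indicator fun _ => v ν, A.indicator fun _ => t₀, ?_, ?_, ?_, ?_⟩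
  · exact fun ν => memLp_indicator_const p hA (v ν) (Or.inr hAfin.ne)
  · exact memLp_indicator_const p hA t₀ (Or.inr hAfin.ne)
  · -- convergence in L^p
    have hvt : Tendsto v atTop (𝓝 t₀) := by
      rw [tendsto_iff_dist_tendsto_zero]
      refine squeeze_zero (fun n => dist_nonneg) (fun n => (hv1 n).le) ?_
      exact tendsto_one_div_add_atTop_nhds_zero_nat
    have heq : ∀ ν, (A.indicator fun _ => v ν) - (A.indicator fun _ => t₀)
        = A.indicator fun _ => v ν - t₀ := by
      intro ν
      funext x
      by_cases hx : x ∈ A <;> simp [Set.indicator_apply, hx]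
    have hnorm : ∀ ν, eLpNorm ((A.indicator fun _ => v ν) - (A.indicator fun _ => t₀)) p μ
        = (‖v ν - t₀‖₊ : ℝ≥0∞) * μ A ^ (1 / p.toReal) := by
      intro ν
      rw [heq ν, eLpNorm_indicator_const hA hp0 hp', enorm_eq_nnnorm]
    simp only [hnorm]
    have h1 : Tendsto (fun ν => (‖v ν - t₀‖₊ : ℝ≥0∞)) atTop (𝓝 0) := by
      have := (hvt.edist (tendsto_const_nhds (x := t₀)))
      simpa [edist_eq_enorm_sub, enorm_eq_nnnorm] using this
    have h2 : μ A ^ (1 / p.toReal) ≠ ∞ :=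
      ENNReal.rpow_ne_top_of_nonneg (by positivity) hAfin.ne
    simpa using ENNReal.Tendsto.mul_const h1 (b := μ A ^ (1 / p.toReal)) (Or.inr h2)
  · -- no convergence in L^q
    intro hcontra
    have heq : ∀ ν, (f ∘ A.indicator fun _ => v ν) - (f ∘ A.indicator fun _ => t₀)
        = A.indicator fun _ => f (v ν) - f t₀ := by
      intro ν
      funext x
      by_cases hx : x ∈ A <;> simp [Function.comp, Set.indicator_apply, hx, hf0]
    have hnorm : ∀ ν, eLpNorm ((f ∘ A.indicator fun _ => v ν) - (f ∘ A.indicator fun _ => t₀)) q μ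
        = (‖f (v ν) - f t₀‖₊ : ℝ≥0∞) * μ A ^ (1 / q.toReal) := by
      intro ν
      rw [heq ν, eLpNorm_indicator_const hA hq0 hq', enorm_eq_nnnorm]
    simp only [hnorm] at hcontra
    set c : ℝ≥0∞ := ENNReal.ofReal ε * μ A ^ (1 / q.toReal) with hc
    have hc0 : 0 < c := by
      apply ENNReal.mul_pos
      · simp [ENNReal.ofReal_pos, hε]
      · exact (ENNReal.rpow_pos hA0 hAfin.ne).ne'
    have hlb : ∀ ν, c ≤ (‖f (v ν) - f t₀‖₊ : ℝ≥0∞) * μ A ^ (1 / q.toReal) := by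
      intro ν
      apply mul_le_mul_left
      rw [← ENNReal.ofReal_coe_nnreal]
      apply ENNReal.ofReal_le_ofReal
      simpa [Real.dist_eq] using hv2 ν
    have := hcontra.eventually (gt_mem_nhds hc0)
    obtain ⟨ν, hν⟩ := this.exists
    exact absurd (hlb ν) (not_le.mpr hν)
end
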